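/- For all integers n, k with n ≥ k ≥ 0 and every nonzero real λ, the new type degenerate Stirling number of the second kind satisfies {n,k}*_λ = ∑_{m=k}^{n} λ^{m-k} · {m,k} · {n,m}, where {m,k} and {n,m} denote the classical Stirling numbers of the second kind. -/

import Mathlib

open Finset

/-- The Stirling numbers of the second kind, defined by the recurrence
`{n+1, k+1} = (k+1)·{n, k+1} + {n, k}` with `{0,0} = 1`. -/
def stirling2 : ℕ → ℕ → ℕ
  | 0, 0 => 1
  | 0, _ + 1 => 0
  | _ + 1, 0 => 0
  | n + 1, k + 1 => (k + 1) * stirling2 n (k + 1) + stirling2 n k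

lemma stirling2_zero_of_lt : ∀ {m k : ℕ}, m < k → stirling2 m k = 0 := by
  intro m
  induction m with
  | zero => rintro (_ | k) h; · omega
            rfl
  | succ m ih =>
    rintro (_ | k) h; · omega
    show (k + 1) * stirling2 m (k + 1) + stirling2 m k = 0
    rw [ih (by omega), ih (by omega)]
    ring

lemma pow_eq_sum_stirling2 (n p : ℕ) :
    p ^ n = ∑ m ∈ range (n + 1), stirling2 n m * p.descFactorial m := by
  induction n with
  | zero => simp [stirling2]
  | succ n ih =>
    have key : ∀ m : ℕ, p * p.descFactorial m = p.descFactorial (m + 1) + m * p.descFactorial m := by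
      intro m
      rcases le_or_gt m p with h | h
      · rw [Nat.descFactorial_succ]
        have : (p - m) * p.descFactorial m + m * p.descFactorial m
            = ((p - m) + m) * p.descFactorial m := (add_mul _ _ _).symm
        rw [this, Nat.sub_add_cancel h]
      · rw [Nat.descFactorial_succ, Nat.descFactorial_eq_zero_iff_lt.mpr h]
        simp
    have e2 : ∑ m ∈ range (n + 1), m * (stirling2 n m * p.descFactorial m)
        = ∑ i ∈ range (n + 1), stirling2 n (i + 1) * p.descFactorial (i + 1) * (i + 1) := by
      rw [Finset.sum_range_succ' (fun m => m * (stirling2 n m * p.descFactorial m)) n,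
        Finset.sum_range_succ (fun i => stirling2 n (i + 1) * p.descFactorial (i + 1) * (i + 1)) n,
        stirling2_zero_of_lt (show n < n + 1 by omega)]
      simp only [zero_mul, add_zero, mul_zero]
      exact Finset.sum_congr rfl fun i _ => by ring
    calc p ^ (n + 1) = p * p ^ n := by ring
      _ = ∑ m ∈ range (n + 1), stirling2 n m * (p * p.descFactorial m) := by
          rw [ih, Finset.mul_sum]; congr 1; ext m; ring
      _ = ∑ m ∈ range (n + 1), stirling2 n m * p.descFactorial (m + 1)
          + ∑ m ∈ range (n + 1), m * (stirling2 n m * p.descFactorial m) := by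
          rw [← Finset.sum_add_distrib]; congr 1; ext m; rw [key]; ring
      _ = ∑ m ∈ range (n + 2), stirling2 (n + 1) m * p.descFactorial m := by
          rw [Finset.sum_range_succ' (fun m => stirling2 (n + 1) m * p.descFactorial m) (n + 1)]
          have h0 : stirling2 (n + 1) 0 * p.descFactorial 0 = 0 := by rfl
          rw [h0, add_zero, e2]
          have : ∀ i, stirling2 (n + 1) (i + 1) * p.descFactorial (i + 1)
              = stirling2 n (i + 1) * p.descFactorial (i + 1) * (i + 1)
                + stirling2 n i * p.descFactorial (i + 1) := by
            intro i; show ((i + 1) * stirling2 n (i + 1) + stirling2 n i) * _ = _; ring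
          rw [Finset.sum_congr rfl (fun i _ => this i), Finset.sum_add_distrib, add_comm]

noncomputable def Tsum (a b : ℕ) : ℝ :=
  ∑ i ∈ range (b + 1), (-1 : ℝ) ^ (b - i) * (b.choose i) * (i : ℝ) ^ a

lemma alt_sum_eq (m : ℕ) : ∀ k, Tsum m k = (k.factorial : ℝ) * stirling2 m k := by
  induction m with
  | zero =>
    intro k
    have h : ((1 : ℝ) + -1) ^ k = ∑ i ∈ range (k + 1), (-1 : ℝ) ^ (k - i) * k.choose i := by
      rw [add_pow]
      exact Finset.sum_congr rfl fun i _ => by rw [one_pow]; ring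
    have h2 : Tsum 0 k = ((1 : ℝ) + -1) ^ k := by
      rw [h, Tsum]
      exact Finset.sum_congr rfl fun i _ => by rw [pow_zero, mul_one]
    cases k with
    | zero => simp [h2, stirling2]
    | succ j =>
      rw [h2]
      have : stirling2 0 (j + 1) = 0 := rfl
      simp [this]
  | succ m ih =>
    rintro (_ | j)
    · simp [Tsum, stirling2]
    · -- k = j + 1
      have step1 : Tsum (m + 1) (j + 1)
          = ((j : ℝ) + 1) * ∑ i ∈ range (j + 1),
              (-1 : ℝ) ^ (j - i) * (j.choose i) * ((i : ℝ) + 1) ^ m := by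
        rw [Tsum, Finset.sum_range_succ'
          (fun i => (-1 : ℝ) ^ (j + 1 - i) * ((j + 1).choose i) * (i : ℝ) ^ (m + 1)) (j + 1)]
        simp only [Nat.cast_zero, zero_pow (Nat.succ_ne_zero m), mul_zero, add_zero]
        rw [Finset.mul_sum]
        apply Finset.sum_congr rfl
        intro i hi
        have hcast : (((j + 1).choose (i + 1) : ℝ)) * ((i : ℝ) + 1) = ((j : ℝ) + 1) * (j.choose i) := by
          have := Nat.add_one_mul_choose_eq j i
          have : ((j + 1) * j.choose i : ℕ) = ((j + 1).choose (i + 1) * (i + 1) : ℕ) := this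
          exact_mod_cast congrArg (fun x : ℕ => (x : ℝ)) this.symm
        have hsub : j + 1 - (i + 1) = j - i := by omega
        rw [hsub]
        push_cast
        rw [pow_succ]
        linear_combination ((-1 : ℝ) ^ (j - i) * ((i : ℝ) + 1) ^ m) * hcast
      set A : ℝ := ∑ i ∈ range (j + 1),
        (-1 : ℝ) ^ (j - i) * ((j + 1).choose (i + 1)) * ((i : ℝ) + 1) ^ m with hAdef
      set Bs : ℝ := ∑ i ∈ range (j + 1),
        (-1 : ℝ) ^ (j - i) * (j.choose (i + 1)) * ((i : ℝ) + 1) ^ m with hBdef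
      have split : ∑ i ∈ range (j + 1),
          (-1 : ℝ) ^ (j - i) * (j.choose i) * ((i : ℝ) + 1) ^ m = A - Bs := by
        rw [hAdef, hBdef, ← Finset.sum_sub_distrib]
        apply Finset.sum_congr rfl
        intro i _
        have hc : ((j + 1).choose (i + 1) : ℝ) = (j.choose i : ℝ) + (j.choose (i + 1) : ℝ) := by
          exact_mod_cast congrArg (fun x : ℕ => (x : ℝ)) (Nat.choose_succ_succ j i)
        rw [hc]; ring
      have hA : A = Tsum m (j + 1) - (-1 : ℝ) ^ (j + 1) * (0 : ℝ) ^ m := by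
        rw [Tsum, Finset.sum_range_succ'
          (fun i => (-1 : ℝ) ^ (j + 1 - i) * ((j + 1).choose i) * (i : ℝ) ^ m) (j + 1)]
        simp only [Nat.choose_zero_right, Nat.cast_one, mul_one, Nat.cast_zero, Nat.sub_zero]
        have : ∑ i ∈ range (j + 1),
            (-1 : ℝ) ^ (j + 1 - (i + 1)) * ((j + 1).choose (i + 1)) * ((i + 1 : ℕ) : ℝ) ^ m = A := by
          apply Finset.sum_congr rfl
          intro i _
          have hsub : j + 1 - (i + 1) = j - i := by omega
          rw [hsub]; push_cast; ring
        rw [this]; ring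
      have hB : Bs = -(Tsum m j) - (-1 : ℝ) ^ (j + 1) * (0 : ℝ) ^ m := by
        have h1 : ∑ i ∈ range (j + 2), (-1 : ℝ) ^ (j + 1 - i) * (j.choose i) * (i : ℝ) ^ m
            = Bs + (-1 : ℝ) ^ (j + 1) * (0 : ℝ) ^ m := by
          rw [Finset.sum_range_succ'
            (fun i => (-1 : ℝ) ^ (j + 1 - i) * (j.choose i) * (i : ℝ) ^ m) (j + 1)]
          simp only [Nat.choose_zero_right, Nat.cast_one, mul_one, Nat.cast_zero, Nat.sub_zero]
          congr 1
          apply Finset.sum_congr rfl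
          intro i _
          have hsub : j + 1 - (i + 1) = j - i := by omega
          rw [hsub]; push_cast; ring
        have h2 : ∑ i ∈ range (j + 2), (-1 : ℝ) ^ (j + 1 - i) * (j.choose i) * (i : ℝ) ^ m
            = -(Tsum m j) := by
          rw [Finset.sum_range_succ
            (fun i => (-1 : ℝ) ^ (j + 1 - i) * (j.choose i) * (i : ℝ) ^ m) (j + 1),
            Nat.choose_succ_self]
          simp only [Nat.cast_zero, zero_mul, mul_zero, add_zero]
          rw [Tsum, ← Finset.sum_neg_distrib]
          apply Finset.sum_congr rfl
          intro i hi
          have hi' : i ≤ j := by simpa [Nat.lt_succ_iff] using hi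
          have hsub : j + 1 - i = (j - i) + 1 := by omega
          rw [hsub, pow_succ]; ring
        rw [h2] at h1
        linarith
      have hrec : (stirling2 (m + 1) (j + 1) : ℝ)
          = ((j : ℝ) + 1) * stirling2 m (j + 1) + stirling2 m j := by
        have : stirling2 (m + 1) (j + 1) = (j + 1) * stirling2 m (j + 1) + stirling2 m j := rfl
        rw [this]; push_cast; ring
      have hfac : ((j + 1).factorial : ℝ) = ((j : ℝ) + 1) * (j.factorial : ℝ) := by
        rw [Nat.factorial_succ]; push_cast; ring
      rw [step1, split, hA, hB, hrec, hfac, ih (j + 1), ih j, hfac]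
      ring


lemma exp_hasSum (x : ℝ) : HasSum (fun n => x ^ n / n.factorial) (Real.exp x) := by
  rw [Real.exp_eq_exp_ℝ]
  exact NormedSpace.expSeries_div_hasSum_exp x

lemma hasSum_descFac (c : ℝ) (m : ℕ) :
    HasSum (fun p => c ^ p * (Nat.descFactorial p m : ℝ) / p.factorial)
      (c ^ m * Real.exp c) := by
  have hinj : Function.Injective (fun q : ℕ => q + m) := fun a b h => by simpa using h
  have h0 : ∀ p ∉ Set.range (fun q : ℕ => q + m),
      c ^ p * (Nat.descFactorial p m : ℝ) / p.factorial = 0 := by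
    intro p hp
    have hlt : p < m := by
      by_contra h
      exact hp ⟨p - m, by simp; omega⟩
    rw [Nat.descFactorial_eq_zero_iff_lt.mpr hlt]
    simp
  have key := (exp_hasSum c).mul_left (c ^ m)
  rw [← hinj.hasSum_iff h0]
  convert key using 1
  · rfl
  funext q
  show c ^ (q + m) * (Nat.descFactorial (q + m) m : ℝ) / (q + m).factorial
      = c ^ m * (c ^ q / q.factorial)
  have hd : q.factorial * (Nat.descFactorial (q + m) m) = (q + m).factorial := by
    have := Nat.factorial_mul_descFactorial (show m ≤ q + m by omega)
    simpa [show q + m - m = q by omega] using this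
  have hq : (q.factorial : ℝ) ≠ 0 := Nat.cast_ne_zero.mpr q.factorial_ne_zero
  have hqm : ((q + m).factorial : ℝ) ≠ 0 := Nat.cast_ne_zero.mpr (q + m).factorial_ne_zero
  have hdR : (q.factorial : ℝ) * (Nat.descFactorial (q + m) m : ℝ) = ((q + m).factorial : ℝ) := by
    exact_mod_cast congrArg (fun x : ℕ => (x : ℝ)) hd
  field_simp
  rw [pow_add]
  linear_combination (c ^ q * c ^ m) * hdR

noncomputable def Bell (c : ℝ) (n : ℕ) : ℝ :=
  ∑ m ∈ range (n + 1), (stirling2 n m : ℝ) * c ^ m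

lemma bell_hasSum (c t : ℝ) :
    HasSum (fun n => Bell c n * t ^ n / n.factorial)
      (Real.exp (c * (Real.exp t - 1))) := by
  set F : ℕ × ℕ → ℝ := fun pj =>
    Real.exp (-c) * c ^ pj.1 * (pj.1 : ℝ) ^ pj.2 * t ^ pj.2 / (pj.1.factorial * pj.2.factorial)
    with hF
  -- row fibers
  have hrow : ∀ p : ℕ, HasSum (fun j => F (p, j))
      (Real.exp (-c) * c ^ p / p.factorial * Real.exp ((p : ℝ) * t)) := by
    intro p
    have := (exp_hasSum ((p : ℝ) * t)).mul_left (Real.exp (-c) * c ^ p / p.factorial)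
    convert this using 2 with j
    · rfl
    rw [hF]
    simp only [mul_pow]
    field_simp
  -- total over rows
  have htot : HasSum (fun p : ℕ => Real.exp (-c) * c ^ p / p.factorial * Real.exp ((p : ℝ) * t))
      (Real.exp (c * (Real.exp t - 1))) := by
    have h1 := (exp_hasSum (c * Real.exp t)).mul_left (Real.exp (-c))
    have he : Real.exp (-c) * Real.exp (c * Real.exp t) = Real.exp (c * (Real.exp t - 1)) := by
      rw [← Real.exp_add]; ring_nf
    rw [he] at h1
    convert h1 using 2 with p
    · rfl
    rw [mul_pow, ← Real.exp_nat_mul]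
    ring
  -- summability of |F|
  have habs : Summable fun pj => |F pj| := by
    apply (summable_prod_of_nonneg (fun pj => abs_nonneg (F pj))).mpr
    have habs_row : ∀ p : ℕ, HasSum (fun j => |F (p, j)|)
        (Real.exp (-c) * |c| ^ p / p.factorial * Real.exp ((p : ℝ) * |t|)) := by
      intro p
      have := (exp_hasSum ((p : ℝ) * |t|)).mul_left (Real.exp (-c) * |c| ^ p / p.factorial)
      convert this using 2 with j
      · rfl
      rw [hF]
      simp only [mul_pow, abs_div, abs_mul, abs_pow, abs_abs, Nat.abs_cast,
        Real.abs_exp, abs_pow]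
      field_simp
    refine ⟨fun p => (habs_row p).summable, ?_⟩
    have : (fun p : ℕ => ∑' j, |F (p, j)|)
        = fun p : ℕ => Real.exp (-c) * |c| ^ p / p.factorial * Real.exp ((p : ℝ) * |t|) := by
      funext p; exact (habs_row p).tsum_eq
    rw [this]
    have h1 := (exp_hasSum (|c| * Real.exp |t|)).mul_left (Real.exp (-c))
    apply h1.summable.congr
    intro p
    rw [mul_pow, ← Real.exp_nat_mul]
    ring
  have hsummable : Summable F := by
    apply Summable.of_abs habs
  -- identify the total sum of F
  have hFsum : HasSum F (Real.exp (c * (Real.exp t - 1))) := by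
    have h := hsummable.hasSum
    have h2 := h.prod_fiberwise hrow
    rwa [h2.unique htot] at h
  -- swap coordinates
  have hswap : HasSum (fun jp : ℕ × ℕ => F (jp.2, jp.1)) (Real.exp (c * (Real.exp t - 1))) := by
    exact ((Equiv.prodComm ℕ ℕ).hasSum_iff).mpr hFsum
  -- column fibers
  have hcol : ∀ j : ℕ, HasSum (fun p => F (p, j)) (Bell c j * t ^ j / j.factorial) := by
    intro j
    have hterm : ∀ p : ℕ, F (p, j) = ∑ m ∈ range (j + 1),
        (Real.exp (-c) * t ^ j / j.factorial * (stirling2 j m : ℝ))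
          * (c ^ p * (Nat.descFactorial p m : ℝ) / p.factorial) := by
      intro p
      rw [hF]
      simp only
      have hp : ((p : ℕ) : ℝ) ^ j = ∑ m ∈ range (j + 1),
          (stirling2 j m : ℝ) * (Nat.descFactorial p m : ℝ) := by
        exact_mod_cast congrArg (fun x : ℕ => (x : ℝ)) (pow_eq_sum_stirling2 j p)
      rw [hp, Finset.mul_sum, Finset.sum_mul, Finset.sum_div]
      apply Finset.sum_congr rfl
      intro m _
      have hpf : ((p.factorial : ℝ)) ≠ 0 := Nat.cast_ne_zero.mpr p.factorial_ne_zero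
      have hjf : ((j.factorial : ℝ)) ≠ 0 := Nat.cast_ne_zero.mpr j.factorial_ne_zero
      field_simp
    have hsum_m : HasSum (fun p => ∑ m ∈ range (j + 1),
        (Real.exp (-c) * t ^ j / j.factorial * (stirling2 j m : ℝ))
          * (c ^ p * (Nat.descFactorial p m : ℝ) / p.factorial))
        (∑ m ∈ range (j + 1),
          (Real.exp (-c) * t ^ j / j.factorial * (stirling2 j m : ℝ)) * (c ^ m * Real.exp c)) := by
      exact hasSum_sum fun m _ => (hasSum_descFac c m).mul_left _
    have hval : ∑ m ∈ range (j + 1),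
        (Real.exp (-c) * t ^ j / j.factorial * (stirling2 j m : ℝ)) * (c ^ m * Real.exp c)
        = Bell c j * t ^ j / j.factorial := by
      rw [Bell, Finset.sum_mul, Finset.sum_div]
      apply Finset.sum_congr rfl
      intro m _
      have hee : Real.exp (-c) * Real.exp c = 1 := by rw [← Real.exp_add]; simp
      linear_combination ((stirling2 j m : ℝ) * c ^ m * t ^ j / j.factorial) * hee
    rw [← hval]
    have hfun : (fun p : ℕ => F (p, j)) = fun p => ∑ m ∈ range (j + 1),
        (Real.exp (-c) * t ^ j / j.factorial * (stirling2 j m : ℝ))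
          * (c ^ p * (Nat.descFactorial p m : ℝ) / p.factorial) := funext hterm
    rw [hfun]
    exact hsum_m
  exact hswap.prod_fiberwise hcol

noncomputable def dcoef (lam : ℝ) (k n : ℕ) : ℝ :=
  (1 / ((k.factorial : ℝ) * lam ^ k)) *
    ∑ i ∈ range (k + 1), (-1 : ℝ) ^ (k - i) * (k.choose i) * Bell ((i : ℝ) * lam) n

lemma f_hasSum (lam : ℝ) (k : ℕ) (t : ℝ) :
    HasSum (fun n => dcoef lam k n * t ^ n / n.factorial)
      ((1 / (Nat.factorial k : ℝ)) *
        ((1 / lam) * (Real.exp (lam * (Real.exp t - 1)) - 1)) ^ k) := by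
  have hcomb : HasSum (fun n => ∑ i ∈ range (k + 1),
      ((1 / ((k.factorial : ℝ) * lam ^ k)) * ((-1 : ℝ) ^ (k - i) * (k.choose i)))
        * (Bell ((i : ℝ) * lam) n * t ^ n / n.factorial))
      (∑ i ∈ range (k + 1),
        ((1 / ((k.factorial : ℝ) * lam ^ k)) * ((-1 : ℝ) ^ (k - i) * (k.choose i)))
          * Real.exp (((i : ℝ) * lam) * (Real.exp t - 1))) :=
    hasSum_sum fun i _ => (bell_hasSum ((i : ℝ) * lam) t).mul_left _
  have hfun : (fun n => ∑ i ∈ range (k + 1),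
      ((1 / ((k.factorial : ℝ) * lam ^ k)) * ((-1 : ℝ) ^ (k - i) * (k.choose i)))
        * (Bell ((i : ℝ) * lam) n * t ^ n / n.factorial))
      = fun n => dcoef lam k n * t ^ n / n.factorial := by
    funext n
    rw [dcoef, Finset.mul_sum, Finset.sum_mul, Finset.sum_div]
    apply Finset.sum_congr rfl
    intro i _
    ring
  have hval : ∑ i ∈ range (k + 1),
      ((1 / ((k.factorial : ℝ) * lam ^ k)) * ((-1 : ℝ) ^ (k - i) * (k.choose i)))
        * Real.exp (((i : ℝ) * lam) * (Real.exp t - 1))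
      = (1 / (Nat.factorial k : ℝ)) *
        ((1 / lam) * (Real.exp (lam * (Real.exp t - 1)) - 1)) ^ k := by
    rw [mul_pow]
    have hsub := sub_pow (Real.exp (lam * (Real.exp t - 1))) 1 k
    have : (Real.exp (lam * (Real.exp t - 1)) - 1) ^ k
        = ∑ i ∈ range (k + 1), (-1 : ℝ) ^ (k - i) * (k.choose i)
            * Real.exp (((i : ℝ) * lam) * (Real.exp t - 1)) := by
      rw [hsub]
      apply Finset.sum_congr rfl
      intro i hi
      have hi' : i ≤ k := by simpa [Nat.lt_succ_iff] using hi
      have hsign : (-1 : ℝ) ^ (i + k) = (-1 : ℝ) ^ (k - i) := by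
        have : i + k = (k - i) + 2 * i := by omega
        rw [this, pow_add, pow_mul]
        simp
      have hexp : (Real.exp (lam * (Real.exp t - 1))) ^ i
          = Real.exp (((i : ℝ) * lam) * (Real.exp t - 1)) := by
        rw [← Real.exp_nat_mul]
        ring_nf
      rw [hsign, hexp]
      ring
    rw [this, Finset.mul_sum, Finset.mul_sum]
    apply Finset.sum_congr rfl
    intro i _
    rw [one_div, mul_inv, one_div, one_div, inv_pow]
    ring
  rw [hfun, hval] at hcomb
  exact hcomb

lemma dcoef_eq (lam : ℝ) (hlam : lam ≠ 0) (k n : ℕ) (hkn : k ≤ n) :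
    dcoef lam k n = ∑ m ∈ Finset.Icc k n,
      lam ^ (m - k) * (stirling2 m k : ℝ) * (stirling2 n m : ℝ) := by
  have hswap : ∑ i ∈ range (k + 1), (-1 : ℝ) ^ (k - i) * (k.choose i) * Bell ((i : ℝ) * lam) n
      = ∑ m ∈ range (n + 1), (stirling2 n m : ℝ) * lam ^ m * Tsum m k := by
    simp only [Bell, Finset.mul_sum]
    rw [Finset.sum_comm]
    apply Finset.sum_congr rfl
    intro m _
    rw [Tsum, Finset.mul_sum]
    apply Finset.sum_congr rfl
    intro i _
    rw [mul_pow]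
    ring
  rw [dcoef, hswap]
  have hfk : ((k.factorial : ℝ)) ≠ 0 := Nat.cast_ne_zero.mpr k.factorial_ne_zero
  have hlk : lam ^ k ≠ 0 := pow_ne_zero _ hlam
  have hterm : ∀ m ∈ range (n + 1), (stirling2 n m : ℝ) * lam ^ m * Tsum m k
      = (k.factorial : ℝ) * lam ^ k
        * (if k ≤ m then lam ^ (m - k) * (stirling2 m k : ℝ) * (stirling2 n m : ℝ) else 0) := by
    intro m _
    rw [alt_sum_eq]
    by_cases h : k ≤ m
    · rw [if_pos h]
      have : lam ^ m = lam ^ (m - k) * lam ^ k := by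
        rw [← pow_add]
        congr 1
        omega
      rw [this]
      ring
    · rw [if_neg h, stirling2_zero_of_lt (not_le.mp h)]
      simp
  rw [Finset.sum_congr rfl hterm, ← Finset.mul_sum]
  rw [one_div, inv_mul_cancel_left₀ (by positivity)]
  · rw [Finset.sum_ite, Finset.sum_const_zero, add_zero]
    apply Finset.sum_congr
    · ext m
      simp [Finset.mem_filter, Finset.mem_Icc, Nat.lt_succ_iff]
      omega
    · intros; rfl

lemma hasFPowerSeriesAt_of_hasSum {a : ℕ → ℝ} {f : ℝ → ℝ} {ε : ℝ} (hε : 0 < ε)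
    (h : ∀ t : ℝ, |t| < ε → HasSum (fun n => a n * t ^ n) (f t)) :
    HasFPowerSeriesAt f (FormalMultilinearSeries.ofScalars ℝ a) 0 := by
  have hε2 : (0 : ℝ) < ε / 2 := by linarith
  set r : NNReal := ⟨ε / 2, le_of_lt hε2⟩ with hr
  refine ⟨(r : ENNReal), ?_, ?_, ?_⟩
  · -- r ≤ radius
    have hs : Summable (fun n => a n * (ε / 2) ^ n) :=
      (h (ε / 2) (by rw [abs_of_pos hε2]; linarith)).summable
    have ht := hs.tendsto_atTop_zero.abs
    rw [abs_zero] at ht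
    apply FormalMultilinearSeries.le_radius_of_tendsto _ (l := 0)
    convert ht using 2 with n
    rw [FormalMultilinearSeries.ofScalars_norm]
    have : |a n * (ε / 2) ^ n| = |a n| * (ε / 2) ^ n := by
      rw [abs_mul, abs_pow, abs_of_pos hε2]
    rw [this]
    rfl
  · exact_mod_cast hε2
  · intro y hy
    rw [mem_emetric_ball_zero_iff] at hy
    have hy' : |y| < ε := by
      have : ‖y‖ < (r : ℝ) := by exact_mod_cast hy
      have : ‖y‖ < ε / 2 := this
      rw [Real.norm_eq_abs] at this
      linarith
    have := h y hy'
    rw [zero_add]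
    simp only [FormalMultilinearSeries.ofScalars_apply_eq, smul_eq_mul]
    exact this

/-- **Theorem 3.1.** For a nonzero real `λ`, if `B n k = {n, k}*_λ` are the new type degenerate
Stirling numbers of the second kind, defined by the power series expansion
`(1/k!)·((1/λ)(e^{λ(e^t - 1)} - 1))^k = ∑_{n=k}^∞ {n, k}*_λ · tⁿ/n!`, then for all
`n ≥ k ≥ 0` one has `{n, k}*_λ = ∑_{m=k}^n λ^{m-k} {m, k} {n, m}`. -/
theorem new_type_deg_stirling2_eq_sum (lam : ℝ) (hlam : lam ≠ 0) (B : ℕ → ℕ → ℝ)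
    (hB : ∀ k : ℕ, ∃ ε > 0, ∀ t : ℝ, |t| < ε →
      HasSum (fun j : ℕ => B (j + k) k * t ^ (j + k) / (Nat.factorial (j + k) : ℝ))
        ((1 / (Nat.factorial k : ℝ)) *
          ((1 / lam) * (Real.exp (lam * (Real.exp t - 1)) - 1)) ^ k))
    (n k : ℕ) (hkn : k ≤ n) :
    B n k = ∑ m ∈ Finset.Icc k n,
      lam ^ (m - k) * (stirling2 m k : ℝ) * (stirling2 n m : ℝ) := by
  obtain ⟨ε, hε, hS⟩ := hB k
  set f : ℝ → ℝ := fun t => (1 / (Nat.factorial k : ℝ)) *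
    ((1 / lam) * (Real.exp (lam * (Real.exp t - 1)) - 1)) ^ k with hf
  set a : ℕ → ℝ := fun m => if m < k then 0 else B m k / m.factorial with ha
  have hA : ∀ t : ℝ, |t| < ε → HasSum (fun m => a m * t ^ m) (f t) := by
    intro t ht
    have hinj : Function.Injective (fun j : ℕ => j + k) := fun x y hxy => by simpa using hxy
    have h0 : ∀ m ∉ Set.range (fun j : ℕ => j + k), a m * t ^ m = 0 := by
      intro m hm
      have : m < k := by
        by_contra hc
        exact hm ⟨m - k, by simp; omega⟩
      rw [ha]
      simp [this]
    rw [← hinj.hasSum_iff h0]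
    have heq : ((fun m => a m * t ^ m) ∘ fun j : ℕ => j + k)
        = fun j : ℕ => B (j + k) k * t ^ (j + k) / (Nat.factorial (j + k) : ℝ) := by
      funext j
      have hnl : ¬ (j + k < k) := by omega
      simp only [Function.comp_apply, ha, hnl, if_false, ite_false]
      ring
    show HasSum ((fun m => a m * t ^ m) ∘ fun j => j + k) (f t)
    rw [heq]
    exact hS t ht
  have hD : ∀ t : ℝ, |t| < ε → HasSum (fun m => (dcoef lam k m / m.factorial) * t ^ m) (f t) := by
    intro t _
    have h2 := f_hasSum lam k t
    have heq2 : (fun m => dcoef lam k m * t ^ m / m.factorial)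
        = fun m => (dcoef lam k m / m.factorial) * t ^ m := by
      funext m; ring
    rwa [heq2] at h2
  have h1 := hasFPowerSeriesAt_of_hasSum hε hA
  have h2 := hasFPowerSeriesAt_of_hasSum hε hD
  have hps := h1.eq_formalMultilinearSeries h2
  have hcoef : a = fun m => dcoef lam k m / m.factorial :=
    FormalMultilinearSeries.ofScalars_series_injective ℝ ℝ hps
  have hn := congrFun hcoef n
  simp only [ha, if_neg (Nat.not_lt.mpr hkn)] at hn
  have hfn : ((n.factorial : ℝ)) ≠ 0 := Nat.cast_ne_zero.mpr n.factorial_ne_zero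
  have hBn : B n k = dcoef lam k n := by
    field_simp at hn
    exact hn
  rw [hBn, dcoef_eq lam hlam k n hkn]
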